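/- A configuration (u,v) ∈ 𝒞ₙ(k) is decomposable if and only if there exists an (n, Fin k)-expression A such that v a i ≤ u b i whenever a□ᵢb in A; that is, the union of the subspaces G(A) over all (n, Fin k)-expressions A equals the subspace 𝒟ₙ(k) of decomposable configurations. -/

import Mathlib

/-- Formal `(n, Fin k)`-expressions: binary trees whose leaves are labeled by
generators and whose internal nodes are labeled by one of the `n` operations.
Expressions are considered up to the strict associativity of each operation,
via the relation `W.equiv` below. -/
inductive W (n k : ℕ) : Type
  | leaf : Fin k → W n k
  | node : Fin n → W n k → W n k → W n k

namespace W

variable {n k : ℕ}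

/-- The list of leaf labels, from left to right. -/
def leaves : W n k → List (Fin k)
  | leaf a => [a]
  | node _ A B => A.leaves ++ B.leaves

/-- `A.Exact T`: the expression `A` uses each element of `T` exactly once and
no other generators. -/
def Exact (A : W n k) (T : Finset (Fin k)) : Prop :=
  A.leaves.Nodup ∧ A.leaves.toFinset = T

/-- `A.inRel a b i` means `a □ᵢ b` in `A`: the lowest common "ancestor" node of the
leaves `a` and `b` carries the operation `i`, with `a` to the left of `b`. -/
def inRel : W n k → Fin k → Fin k → Fin n → Prop
  | leaf _, _, _, _ => False
  | node j A B, a, b, i => A.inRel a b i ∨ B.inRel a b i ∨ (j = i ∧ a ∈ A.leaves ∧ b ∈ B.leaves)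

/-- The order relation of the poset `M̂ₙ`: `A ≤ B` iff whenever `a □ᵢ b` in `A`,
either `a □ⱼ b` in `B` for some `j ≥ i`, or `b □ⱼ a` in `B` for some `j > i`. -/
def le (A B : W n k) : Prop :=
  ∀ a b : Fin k, a ≠ b → ∀ i : Fin n, A.inRel a b i →
    ∃ j : Fin n, (i ≤ j ∧ B.inRel a b j) ∨ (i < j ∧ B.inRel b a j)

/-- One step of the associativity/congruence relation on expressions. -/
inductive Step : W n k → W n k → Prop
  | assoc (i : Fin n) (A B C : W n k) :
      Step (node i (node i A B) C) (node i A (node i B C))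
  | congr_left (i : Fin n) {A A' : W n k} (B : W n k) :
      Step A A' → Step (node i A B) (node i A' B)
  | congr_right (i : Fin n) (A : W n k) {B B' : W n k} :
      Step B B' → Step (node i A B) (node i A B')

/-- Equality of expressions (strict associativity of each operation). -/
def equiv (A B : W n k) : Prop := Relation.EqvGen Step A B

/-- Restriction of an expression to the leaves satisfying `p`
(`none` if no leaf survives). -/
def restrict : W n k → (Fin k → Bool) → Option (W n k)
  | leaf a, p => if p a then some (leaf a) else none
  | node i A B, p =>
    match A.restrict p, B.restrict p with
    | some A', some B' => some (node i A' B')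
    | some A', none => some A'
    | none, o => o

end W

/-- Joining two possibly-empty expressions by the operation `i`, with the convention
that the empty expression is a unit. -/
def onode {n k : ℕ} (i : Fin n) : Option (W n k) → Option (W n k) → Option (W n k)
  | some A, some B => some (W.node i A B)
  | some A, none => some A
  | none, o => o

/-- Equality of possibly-empty expressions. -/
def OEquiv {n k : ℕ} : Option (W n k) → Option (W n k) → Prop
  | none, none => True
  | some A, some B => A.equiv B
  | _, _ => False

/-- `A − T`: the expression `A` with the leaves belonging to `T` deleted. -/
def diffR {n k : ℕ} (A : W n k) (T : Finset (Fin k)) : Option (W n k) :=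
  A.restrict fun a => decide (a ∉ T)

/-- The open box (interior) of the `a`-th little `n`-cube of a pair `c = (u, v)`. -/
def cubeInterior (n k : ℕ) (c : (Fin k → Fin n → ℝ) × (Fin k → Fin n → ℝ)) (a : Fin k) :
    Set (Fin n → ℝ) :=
  Set.univ.pi fun i => Set.Ioo (c.1 a i) (c.2 a i)

/-- `c = (u, v)` is a configuration of `k` little `n`-cubes. -/
def IsConfig (n k : ℕ) (c : (Fin k → Fin n → ℝ) × (Fin k → Fin n → ℝ)) : Prop :=
  (∀ a i, 0 ≤ c.1 a i ∧ c.1 a i < c.2 a i ∧ c.2 a i ≤ 1) ∧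
  ∀ a b : Fin k, a ≠ b → Disjoint (cubeInterior n k c a) (cubeInterior n k c b)

/-- `G(A)`: the configurations whose cubes are separated as prescribed by the
expression `A`. -/
def Gset (n k : ℕ) (A : W n k) : Set ((Fin k → Fin n → ℝ) × (Fin k → Fin n → ℝ)) :=
  {c | IsConfig n k c ∧ ∀ a b i, A.inRel a b i → c.2 a i ≤ c.1 b i}

/-- `F(A) = ⋃_{X ≤ A} G(X)`, the union over all expressions `X` on the full set of
generators mapping into `A` in the poset `M̂ₙ(Fin k)`. -/
def Fset (n k : ℕ) (A : W n k) : Set ((Fin k → Fin n → ℝ) × (Fin k → Fin n → ℝ)) :=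
  ⋃ (X : W n k) (_ : X.Exact Finset.univ ∧ X.le A), Gset n k X

/-- Decomposability of a set of labels for the (fixed) configuration `c`. -/
inductive Decomp (n k : ℕ) (c : (Fin k → Fin n → ℝ) × (Fin k → Fin n → ℝ)) :
    Finset (Fin k) → Prop
  | small (S : Finset (Fin k)) : S.card ≤ 1 → Decomp n k c S
  | split (S S₁ S₂ : Finset (Fin k)) (i : Fin n) :
      S₁.Nonempty → S₂.Nonempty → Disjoint S₁ S₂ → S₁ ∪ S₂ = S →
      (∀ a ∈ S₁, ∀ b ∈ S₂, c.2 a i ≤ c.1 b i) →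
      Decomp n k c S₁ → Decomp n k c S₂ → Decomp n k c S


lemma W.leaves_ne_nil {n k : ℕ} (A : W n k) : A.leaves ≠ [] := by
  induction A with
  | leaf a => simp [W.leaves]
  | node i A B ihA ihB => simp [W.leaves, ihA]

lemma decomp_of_expr {n k : ℕ} (c : (Fin k → Fin n → ℝ) × (Fin k → Fin n → ℝ)) :
    ∀ A : W n k, ∀ S, A.Exact S → (∀ a b i, A.inRel a b i → c.2 a i ≤ c.1 b i) →
      Decomp n k c S := by
  intro A
  induction A with
  | leaf a =>
    intro S hE _
    obtain ⟨_, hT⟩ := hE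
    apply Decomp.small
    simp [W.leaves] at hT
    simp [← hT]
  | node i A B ihA ihB =>
    intro S hE hsep
    obtain ⟨hnd, hT⟩ := hE
    simp only [W.leaves, List.nodup_append] at hnd
    obtain ⟨n1, n2, hdisj⟩ := hnd
    refine Decomp.split S A.leaves.toFinset B.leaves.toFinset i ?_ ?_ ?_ ?_ ?_ ?_ ?_
    · obtain ⟨x, hx⟩ := List.exists_mem_of_ne_nil _ (W.leaves_ne_nil A)
      exact ⟨x, List.mem_toFinset.mpr hx⟩
    · obtain ⟨x, hx⟩ := List.exists_mem_of_ne_nil _ (W.leaves_ne_nil B)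
      exact ⟨x, List.mem_toFinset.mpr hx⟩
    · rw [Finset.disjoint_left]
      intro a ha hb
      exact hdisj a (List.mem_toFinset.mp ha) a (List.mem_toFinset.mp hb) rfl
    · rw [← hT]; simp [W.leaves]
    · intro a ha b hb
      exact hsep a b i (Or.inr (Or.inr ⟨rfl, List.mem_toFinset.mp ha, List.mem_toFinset.mp hb⟩))
    · exact ihA _ ⟨n1, rfl⟩ (fun a b j h => hsep a b j (Or.inl h))
    · exact ihB _ ⟨n2, rfl⟩ (fun a b j h => hsep a b j (Or.inr (Or.inl h)))

lemma expr_of_decomp {n k : ℕ} (c : (Fin k → Fin n → ℝ) × (Fin k → Fin n → ℝ))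
    {S : Finset (Fin k)} (h : Decomp n k c S) : S.Nonempty →
    ∃ A : W n k, A.Exact S ∧ ∀ a b i, A.inRel a b i → c.2 a i ≤ c.1 b i := by
  induction h with
  | small S hcard =>
    intro hS
    obtain ⟨a, rfl⟩ := Finset.card_eq_one.mp (le_antisymm hcard (Finset.card_pos.mpr hS))
    refine ⟨W.leaf a, ⟨List.nodup_singleton a, by simp [W.leaves]⟩, ?_⟩
    intro a b i h
    cases h
  | split S S₁ S₂ i h1 h2 hd hu hsep d1 d2 ih1 ih2 =>
    intro _
    obtain ⟨A₁, ⟨m1, t1⟩, s1⟩ := ih1 h1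
    obtain ⟨A₂, ⟨m2, t2⟩, s2⟩ := ih2 h2
    refine ⟨W.node i A₁ A₂, ⟨?_, ?_⟩, ?_⟩
    · simp only [W.leaves, List.nodup_append]
      refine ⟨m1, m2, fun x hx x' hx' hxx' => ?_⟩
      subst hxx'
      have hx1 : x ∈ S₁ := t1 ▸ List.mem_toFinset.mpr hx
      have hx2 : x ∈ S₂ := t2 ▸ List.mem_toFinset.mpr hx'
      exact Finset.disjoint_left.mp hd hx1 hx2
    · simp [W.leaves, t1, t2, hu]
    · rintro a b j (h | h | ⟨rfl, ha, hb⟩)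
      · exact s1 a b j h
      · exact s2 a b j h
      · exact hsep a (t1 ▸ List.mem_toFinset.mpr ha) b (t2 ▸ List.mem_toFinset.mpr hb)

/-- STATEMENT 10: a configuration is decomposable if and only if it lies in `G(A)` for
some `(n, Fin k)`-expression `A`; i.e. `⋃_A G(A) = 𝒟ₙ(k)`. -/
theorem decomposable_iff_separated_by_expression (n k : ℕ) (hn : 1 ≤ n) (hk : 1 ≤ k)
    (c : (Fin k → Fin n → ℝ) × (Fin k → Fin n → ℝ)) (hc : IsConfig n k c) :
    Decomp n k c Finset.univ ↔
      ∃ A : W n k, A.Exact Finset.univ ∧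
        ∀ a b i, A.inRel a b i → c.2 a i ≤ c.1 b i := by
  constructor
  · intro h
    have : Nonempty (Fin k) := ⟨⟨0, hk⟩⟩
    exact expr_of_decomp c h Finset.univ_nonempty
  · rintro ⟨A, hE, hsep⟩
    exact decomp_of_expr c A _ hE hsep
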